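/- arXiv:2602.24031 — 2 statements merged into one kernel-verified Lean document; each statement's English description precedes it below -/
import Mathlib

section
/- Let K = K_1 × ⋯ × K_m be an étale ℚ-algebra and R a sieve over K such that there exists a finite set T ⊆ O_K with R_i ⊆ T + 𝔟_i for every i. If ∑_{i≥1} 1/N(𝔟_i) < ∞, then R is Erdős and has strong light tails for the Følner sequence (B_N). In particular, every Erdős B-free system over an étale ℚ-algebra (the case R_i = 𝔟_i with ∑_i 1/N(𝔟_i) < ∞) has strong light tails for (B_N). -/
open Filter Topology MeasureTheory Pointwise symmDiff

noncomputable section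

namespace ErdosSieve

variable {O : Type} [CommRing O]

/-- A sieve over (the ring of integers of) an étale `ℚ`-algebra: a sequence of pairwise
coprime invertible (i.e. finite-quotient) ideals `b i` together with, for each `i`, a finite
set `gen i` of representatives, so that the sieved-out set is `R_i = gen i + b i`, which is
required to be a proper subset of the ring. -/
structure Sieve (O : Type) [CommRing O] : Type where
  b : ℕ → Ideal O
  gen : ℕ → Finset O
  coprime : ∀ i j, i ≠ j → b i ⊔ b j = ⊤
  finQuot : ∀ i, Finite (O ⧸ b i)
  ne_univ : ∀ i, (↑(gen i) : Set O) + (↑(b i) : Set O) ≠ Set.univ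

/-- The `i`-th sieved-out set `R_i = gen i + b i`. -/
def Sieve.RSet (S : Sieve O) (i : ℕ) : Set O := (↑(S.gen i) : Set O) + (↑(S.b i) : Set O)

/-- The set `F_R` of `R`-free numbers. -/
def Sieve.FR (S : Sieve O) : Set O := (⋃ i, S.RSet i)ᶜ

/-- The norm `N(b i)` of the `i`-th ideal. -/
def Sieve.normb (S : Sieve O) (i : ℕ) : ℕ := Nat.card (O ⧸ S.b i)

/-- The number `|R_i|` of residue classes modulo `b i` met by `R_i`. -/
def Sieve.cardR (S : Sieve O) (i : ℕ) : ℕ :=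
  Nat.card ((Ideal.Quotient.mk (S.b i)) '' (S.RSet i))

/-- A sieve is Erdős if `∑ |R_i| / N(b_i) < ∞`. -/
def Sieve.IsErdos (S : Sieve O) : Prop :=
  Summable fun i => (S.cardR i : ℝ) / (S.normb i : ℝ)

/-- A Følner sequence: finite nonempty subsets of `O` which are asymptotically
translation-invariant. -/
def IsFolner (I : ℕ → Set O) : Prop :=
  (∀ N, (I N).Finite) ∧ (∀ N, (I N).Nonempty) ∧
    ∀ x : O, Tendsto
      (fun N => (Nat.card ↥(((x + ·) '' I N) ∆ (I N)) : ℝ) / (Nat.card ↥(I N) : ℝ))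
      atTop (𝓝 0)

/-- Upper density along a (Følner) sequence. -/
def upperDensity (I : ℕ → Set O) (A : Set O) : ℝ :=
  limsup (fun N => (Nat.card ↥(A ∩ I N) : ℝ) / (Nat.card ↥(I N) : ℝ)) atTop

/-- `A` has density `d` along the sequence `I`. -/
def HasDensity (I : ℕ → Set O) (A : Set O) (d : ℝ) : Prop :=
  Tendsto (fun N => (Nat.card ↥(A ∩ I N) : ℝ) / (Nat.card ↥(I N) : ℝ)) atTop (𝓝 d)

/-- `⋃_{i ≥ L} R i`. -/
def unionGe (R : ℕ → Set O) (L : ℕ) : Set O := ⋃ i, ⋃ (_ : L ≤ i), R i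

/-- `⋃_{i < L} R i`. -/
def unionLt (R : ℕ → Set O) (L : ℕ) : Set O := ⋃ i, ⋃ (_ : i < L), R i

/-- The weak light tails property for a family of sieved-out sets:
`limsup`-density of `⋃_{i ≥ L} R_i ∖ ⋃_{j < L} R_j` tends to `0` as `L → ∞`. -/
def WeakLightTailsFam (I : ℕ → Set O) (R : ℕ → Set O) : Prop :=
  Tendsto (fun L => upperDensity I (unionGe R L \ unionLt R L)) atTop (𝓝 0)

/-- The strong light tails property for a family of sieved-out sets. -/
def StrongLightTailsFam (I : ℕ → Set O) (R : ℕ → Set O) : Prop :=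
  Tendsto (fun L => upperDensity I (unionGe R L)) atTop (𝓝 0)

/-- A sieve has weak light tails for `I` if it is Erdős and the tail differences have
vanishing upper density. -/
def Sieve.HasWeakLightTails (S : Sieve O) (I : ℕ → Set O) : Prop :=
  S.IsErdos ∧ WeakLightTailsFam I S.RSet

/-- A sieve has strong light tails for `I` if it is Erdős and the tails have vanishing
upper density. -/
def Sieve.HasStrongLightTails (S : Sieve O) (I : ℕ → Set O) : Prop :=
  S.IsErdos ∧ StrongLightTailsFam I S.RSet

/-- The infinite product `∏_i (1 - |R_i|/N(b_i))`, realized as the infimum of the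
(nonincreasing) sequence of partial products, i.e. as its limit. -/
def Sieve.prodDensity (S : Sieve O) : ℝ :=
  ⨅ L : ℕ, ∏ i ∈ Finset.range L, (1 - (S.cardR i : ℝ) / (S.normb i : ℝ))

/-- `A` is an `R`-admissible set: `-A + R_i ≠ O` for all `i`. -/
def Sieve.Admissible (S : Sieve O) (A : Set O) : Prop :=
  ∀ i, -A + S.RSet i ≠ Set.univ

/-- The number `|-A + R_i|` of residue classes modulo `b i` met by `-A + R_i`. -/
def Sieve.cardShift (S : Sieve O) (A : Set O) (i : ℕ) : ℕ :=
  Nat.card ((Ideal.Quotient.mk (S.b i)) '' (-A + S.RSet i))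

/-- The infinite product `∏_i (1 - |-A + R_i|/N(b_i))` (as the infimum of the
partial products). -/
def Sieve.prodDensityShift (S : Sieve O) (A : Set O) : ℝ :=
  ⨅ L : ℕ, ∏ i ∈ Finset.range L, (1 - (S.cardShift A i : ℝ) / (S.normb i : ℝ))

/-- A subset `Y` of `O` is syndetic if finitely many translates of it cover `O`. -/
def Syndetic (Y : Set O) : Prop := ∃ C : Finset O, Y + (↑C : Set O) = Set.univ

-- Indicator of a subset of `O`, i.e. a point of the shift space `{0,1}^O`.
open Classical in
def chiSet (A : Set O) : O → Bool := fun x => if x ∈ A then true else false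

/-- The shift action `S_a(A) = A - a` on `{0,1}^O`: `χ_{A - a}(x) = χ_A (x + a)`. -/
def shiftB (a : O) (f : O → Bool) : O → Bool := fun x => f (x + a)

/-- The odometer group `G_R = ∏ i, O ⧸ b i`. -/
abbrev Sieve.GR (S : Sieve O) : Type := ∀ i : ℕ, O ⧸ S.b i

-- The map `φ_R : G_R → {0,1}^O`: `a ∈ φ_R(g)` iff `a + g i` avoids (the image of) `R_i`
-- modulo `b i` for every `i`.
open Classical in
def Sieve.phiB (S : Sieve O) (g : S.GR) : O → Bool := fun a =>
  if (∀ i, (Ideal.Quotient.mk (S.b i) a + g i) ∉ (Ideal.Quotient.mk (S.b i)) '' (S.RSet i))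
  then true else false

/-- The Mirsky measure `ν_R` on `{0,1}^O`: the pushforward under `φ_R` of the Haar
probability measure of the compact group `G_R` (each factor being finite and discrete,
and the Haar measure being normalized so that the whole group has measure `1`). -/
def Sieve.mirsky (S : Sieve O) : Measure (O → Bool) := by
  letI : ∀ i, TopologicalSpace (O ⧸ S.b i) := fun _ => ⊥
  haveI : ∀ i, DiscreteTopology (O ⧸ S.b i) := fun _ => ⟨rfl⟩
  haveI : ∀ i, Finite (O ⧸ S.b i) := S.finQuot
  haveI : ∀ i, IsTopologicalAddGroup (O ⧸ S.b i) := fun i => { }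
  letI : MeasurableSpace S.GR := borel _
  haveI : BorelSpace S.GR := ⟨rfl⟩
  exact Measure.map S.phiB (Measure.addHaarMeasure (G := S.GR) ⊤)

/-- The ring of integers of the étale `ℚ`-algebra `K 0 × ⋯ × K (m-1)`. -/
abbrev OK {m : ℕ} (K : Fin m → Type) [∀ j, Field (K j)] [∀ j, NumberField (K j)] : Type :=
  ∀ j, NumberField.RingOfIntegers (K j)

variable {m : ℕ} (K : Fin m → Type) [∀ j, Field (K j)] [∀ j, NumberField (K j)]

/-- The "ball" `B_N` in `O_K`: elements all of whose archimedean embeddings have absolute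
value at most `N` (the max over embeddings of all the number-field components). -/
def ball (N : ℕ) : Set (OK K) :=
  {x | ∀ j, ∀ φ : K j →+* ℂ,
    ‖φ (algebraMap (NumberField.RingOfIntegers (K j)) (K j) (x j))‖ ≤ N}

section ErdosAuxSection
open NumberField Module
set_option linter.unusedSectionVars false

namespace ErdosAux


/-- Grid counting: an `s`-separated (in sup norm of integer coordinates) set
inside a coordinate box of radius `R` has at most `(2R/s+2)^n` elements. -/
lemma grid_count {ι : Type} [Fintype ι] (P : Set (ι → ℤ)) (R s : ℝ)
    (hR : 0 ≤ R) (hs : 0 < s)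
    (hbd : ∀ v ∈ P, ∀ k, |((v k : ℤ) : ℝ)| ≤ R)
    (hsep : ∀ v ∈ P, ∀ w ∈ P, v ≠ w → ∃ k, s ≤ |((v k : ℝ) - (w k : ℝ))|) :
    P.Finite ∧ (Nat.card P : ℝ) ≤ (2 * R / s + 2) ^ (Fintype.card ι) := by
  classical
  set f : (ι → ℤ) → ι → ℤ := fun v k => ⌊(v k : ℝ) / s⌋ with hf
  have hinj : Set.InjOn f P := by
    intro v hv w hw hvw
    by_contra hne
    obtain ⟨k, hk⟩ := hsep v hv w hw hne
    have h1 : ⌊(v k : ℝ) / s⌋ = ⌊(w k : ℝ) / s⌋ := congrFun hvw k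
    have h2 : |(v k : ℝ) / s - (w k : ℝ) / s| < 1 := by
      apply Int.abs_sub_lt_one_of_floor_eq_floor h1
    rw [div_sub_div_same, abs_div, abs_of_pos hs, div_lt_one hs] at h2
    exact absurd hk (not_le.mpr h2)
  set lo : ℤ := ⌊-R / s⌋ with hlo
  set hi : ℤ := ⌊R / s⌋ with hhi
  have himg : f '' P ⊆ ↑(Fintype.piFinset fun _ : ι => Finset.Icc lo hi) := by
    rintro _ ⟨v, hv, rfl⟩
    simp only [Fintype.coe_piFinset, Set.mem_pi, Set.mem_univ,
      forall_true_left, Finset.coe_Icc, Set.mem_Icc]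
    intro k
    have h := hbd v hv k
    rw [abs_le] at h
    constructor
    · exact Int.floor_le_floor (by apply div_le_div_of_nonneg_right h.1 hs.le)
    · exact Int.floor_le_floor (by apply div_le_div_of_nonneg_right h.2 hs.le)
  have hboxfin : (↑(Fintype.piFinset fun _ : ι => Finset.Icc lo hi) :
      Set (ι → ℤ)).Finite := Set.finite_coe_iff.mp (by infer_instance)
  have hPfin : P.Finite := by
    have : (f '' P).Finite := hboxfin.subset himg
    exact Set.Finite.of_finite_image this hinj
  refine ⟨hPfin, ?_⟩
  have hcard2 : Nat.card P ≤ (Fintype.piFinset fun _ : ι => Finset.Icc lo hi).card := by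
    rw [Nat.card_coe_set_eq, ← Set.ncard_image_of_injOn hinj]
    rw [← Set.ncard_coe_finset]
    exact Set.ncard_le_ncard himg hboxfin
  rw [Fintype.card_piFinset] at hcard2
  simp only [Int.card_Icc, Finset.prod_const, Finset.card_univ] at hcard2
  have hIcc : ((hi + 1 - lo).toNat : ℝ) ≤ 2 * R / s + 2 := by
    have h1 : (hi : ℝ) ≤ R / s := Int.floor_le _
    have h2 : -R / s - 1 ≤ (lo : ℝ) := by
      have := Int.sub_one_lt_floor (-R / s)
      linarith
    rcases le_or_gt (hi + 1 - lo) 0 with h | h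
    · rw [Int.toNat_of_nonpos h]
      have : (0:ℝ) ≤ 2 * R / s := by positivity
      norm_num; linarith
    · have h3 : ((hi + 1 - lo).toNat : ℝ) = (hi:ℝ) + 1 - (lo:ℝ) := by
        exact_mod_cast congrArg (fun z : ℤ => (z : ℝ)) (Int.toNat_of_nonneg h.le)
      rw [h3]
      have h5 : 2 * R / s = R / s + R / s := by ring
      have h4 : -R / s = -(R / s) := neg_div _ _
      linarith
  calc (Nat.card ↥P : ℝ) ≤ ((hi + 1 - lo).toNat ^ (Fintype.card ι) : ℕ) := by
        exact_mod_cast hcard2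
    _ ≤ (2 * R / s + 2) ^ (Fintype.card ι) := by
        push_cast
        exact pow_le_pow_left₀ (by positivity) hIcc _



variable (F : Type) [Field F] [NumberField F]

/-- ball in a single number field -/
def ballF (N : ℕ) : Set (𝓞 F) := {y | house (y : F) ≤ N}

variable {F}

lemma abs_embed_le_house (φ : F →+* ℂ) (x : F) : ‖φ x‖ ≤ house x := by
  rw [← canonicalEmbedding.apply_at φ x]
  exact norm_le_pi_norm (canonicalEmbedding F x) φ

lemma house_le_of_forall {x : F} {r : ℝ} (hr : 0 ≤ r)
    (h : ∀ φ : F →+* ℂ, ‖φ x‖ ≤ r) : house x ≤ r := by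
  rw [house, pi_norm_le_iff_of_nonneg hr]
  intro φ
  rw [canonicalEmbedding.apply_at φ x]
  exact h φ

lemma mem_ballF_iff {N : ℕ} {y : 𝓞 F} :
    y ∈ ballF F N ↔ ∀ φ : F →+* ℂ, ‖φ (y : F)‖ ≤ N := by
  constructor
  · intro h φ; exact le_trans (abs_embed_le_house φ _) h
  · intro h; exact house_le_of_forall (Nat.cast_nonneg N) h

lemma house_sub_le (x y : F) : house (x - y) ≤ house x + house y := by
  have h0 : 0 ≤ house x + house y := add_nonneg (house_nonneg x) (house_nonneg y)
  refine house_le_of_forall h0 (fun φ => ?_)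
  rw [map_sub]
  exact le_trans (norm_sub_le _ _)
    (add_le_add (abs_embed_le_house φ x) (abs_embed_le_house φ y))

lemma house_intCast_mul (z : ℤ) (x : F) : house ((z : F) * x) ≤ |(z:ℝ)| * house x := by
  refine le_trans (house_mul_le _ _) ?_
  rw [house_intCast]
  push_cast
  exact le_rfl



variable {F : Type} [Field F] [NumberField F]


/-- N(b) ≤ house(y)^n for nonzero y ∈ b. -/
lemma card_quot_le_house_pow (b : Ideal (𝓞 F)) {y : 𝓞 F} (hy : y ∈ b) (hy0 : y ≠ 0) :
    (Nat.card (𝓞 F ⧸ b) : ℝ) ≤ house (y : F) ^ (finrank ℚ F) := by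
  have hdvd : Ideal.absNorm b ∣ Ideal.absNorm (Ideal.span {y}) :=
    Ideal.absNorm_dvd_absNorm_of_le ((Ideal.span_singleton_le_iff_mem b).mpr hy)
  rw [Ideal.absNorm_span_singleton] at hdvd
  have hnz : Algebra.norm ℤ y ≠ 0 := by
    rwa [Algebra.norm_ne_zero_iff]
  have hle : Ideal.absNorm b ≤ (Algebra.norm ℤ y).natAbs :=
    Nat.le_of_dvd (Int.natAbs_pos.mpr hnz) hdvd
  have hcardeq : Nat.card (𝓞 F ⧸ b) = Ideal.absNorm b := by
    rw [Ideal.absNorm_apply, Submodule.cardQuot_apply]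
  have habs : ((Algebra.norm ℤ y).natAbs : ℝ) ≤ house (y : F) ^ (finrank ℚ F) := by
    have h1 : ‖algebraMap ℚ ℂ (Algebra.norm ℚ (y : F))‖
        ≤ house (y : F) ^ (finrank ℚ F) := by
      rw [Algebra.norm_eq_prod_embeddings ℚ ℂ (y : F), norm_prod]
      calc ∏ σ : F →ₐ[ℚ] ℂ, ‖σ (y : F)‖
          ≤ ∏ _σ : F →ₐ[ℚ] ℂ, house (y : F) := by
            refine Finset.prod_le_prod (fun _ _ => norm_nonneg _) (fun σ _ => ?_)
            exact abs_embed_le_house σ.toRingHom (y : F)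
        _ = house (y : F) ^ (finrank ℚ F) := by
            rw [Finset.prod_const, Finset.card_univ, AlgHom.card]
    have h2 : ‖algebraMap ℚ ℂ (Algebra.norm ℚ (y : F))‖
        = |((Algebra.norm ℚ (y : F) : ℚ) : ℝ)| := by
      rw [show (algebraMap ℚ ℂ) (Algebra.norm ℚ (y : F))
          = (((Algebra.norm ℚ (y : F) : ℚ) : ℝ) : ℂ) by push_cast; rfl]
      rw [Complex.norm_real, Real.norm_eq_abs]
    rw [h2] at h1
    rw [← Algebra.coe_norm_int] at h1
    calc ((Algebra.norm ℤ y).natAbs : ℝ) = |((Algebra.norm ℤ y : ℤ) : ℝ)| := by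
          rw [Nat.cast_natAbs]; push_cast; ring
      _ ≤ house (y : F) ^ (finrank ℚ F) := by
          rw [show ((Algebra.norm ℤ y : ℤ) : ℝ) = (((Algebra.norm ℤ y : ℤ) : ℚ) : ℝ) by push_cast; rfl]
          exact h1
  rw [hcardeq]
  exact le_trans (Nat.cast_le.mpr hle) habs

/-- the ℤ-basis of 𝓞 F indexed by embeddings -/
def basF (F : Type) [Field F] [NumberField F] : Basis (F →+* ℂ) ℤ (𝓞 F) :=
  (RingOfIntegers.basis F).reindex (equivReindex F).symm

lemma exists_coord_bound :
    ∃ c : ℝ, 1 ≤ c ∧ ∀ (x : 𝓞 F) (k : F →+* ℂ),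
      |(((basF F).repr x k : ℤ) : ℝ)| ≤ c * house (x : F) := by
  classical
  obtain ⟨c0, hc0⟩ : ∃ c0 : ℝ, ∀ (α : 𝓞 F) (i : F →+* ℂ),
      ‖((((integralBasis F).reindex (equivReindex F).symm).repr (α : F)) i : ℂ)‖ ≤
        c0 * house (algebraMap (𝓞 F) F α) :=
    ⟨_, fun α i => house.basis_repr_norm_le_const_mul_house F α i⟩
  refine ⟨max c0 1, le_max_right _ _, fun x k => ?_⟩
  have key : (((integralBasis F).reindex (equivReindex F).symm).repr (x : F)) k
      = (((basF F).repr x k : ℤ) : ℚ) := by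
    rw [Basis.repr_reindex_apply, integralBasis_repr_apply, basF, Basis.repr_reindex_apply]
    rfl
  have h1 := hc0 x k
  rw [key] at h1
  have h2 : ‖((((basF F).repr x k : ℤ) : ℚ) : ℂ)‖ = |(((basF F).repr x k : ℤ) : ℝ)| := by
    rw [show ((((basF F).repr x k : ℤ) : ℚ) : ℂ) = (((((basF F).repr x k : ℤ) : ℚ) : ℝ) : ℂ) by
      push_cast; rfl]
    rw [Complex.norm_real, Real.norm_eq_abs]
    norm_cast
  rw [h2] at h1
  refine le_trans h1 (mul_le_mul_of_nonneg_right (le_max_left _ _) (house_nonneg _))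



variable {F : Type} [Field F] [NumberField F]


lemma exists_house_bound :
    ∃ c : ℝ, 1 ≤ c ∧ ∀ (x : 𝓞 F) (r : ℝ), 0 ≤ r →
      (∀ k, |(((basF F).repr x k : ℤ) : ℝ)| ≤ r) → house (x : F) ≤ c * r := by
  classical
  refine ⟨1 + ∑ k : F →+* ℂ, house (((basF F) k : F)), ?_, ?_⟩
  · have : (0:ℝ) ≤ ∑ k : F →+* ℂ, house (((basF F) k : F)) :=
      Finset.sum_nonneg (fun k _ => house_nonneg _)
    linarith
  intro x r hr hk
  have hx : (x : F) = ∑ k : F →+* ℂ, ((((basF F).repr x k : ℤ) : F) * ((basF F) k : F)) := by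
    conv_lhs => rw [← (basF F).sum_repr x]
    push_cast
    refine Finset.sum_congr rfl (fun k _ => ?_)
    rw [zsmul_eq_mul]
  rw [hx]
  calc house (∑ k : F →+* ℂ, ((((basF F).repr x k : ℤ) : F) * ((basF F) k : F)))
      ≤ ∑ k : F →+* ℂ, house ((((basF F).repr x k : ℤ) : F) * ((basF F) k : F)) :=
        house_sum_le_sum_house _ _
    _ ≤ ∑ k : F →+* ℂ, r * house (((basF F) k : F)) := by
        refine Finset.sum_le_sum (fun k _ => ?_)
        refine le_trans (house_intCast_mul _ _) ?_
        exact mul_le_mul_of_nonneg_right (hk k) (house_nonneg _)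
    _ = (∑ k : F →+* ℂ, house (((basF F) k : F))) * r := by
        rw [Finset.sum_mul]
        refine Finset.sum_congr rfl (fun k _ => mul_comm _ _)
    _ ≤ (1 + ∑ k : F →+* ℂ, house (((basF F) k : F))) * r := by
        refine mul_le_mul_of_nonneg_right ?_ hr
        linarith


def cosetF (b : Ideal (𝓞 F)) (t : 𝓞 F) : Set (𝓞 F) := {x | x - t ∈ b}

/-- All the counting facts for one number field, with a single constant. -/
theorem field_consts (F : Type) [Field F] [NumberField F] : ∃ a : ℝ, 1 ≤ a ∧
    (∀ N : ℕ, (ballF F N).Finite) ∧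
    (∀ N : ℕ, ((N:ℝ)/a)^(finrank ℚ F) ≤ (Nat.card (ballF F N) : ℝ)) ∧
    (∀ N : ℕ, (Nat.card (ballF F N) : ℝ) ≤ (a*((N:ℝ)+1))^(finrank ℚ F)) ∧
    (∀ (b : Ideal (𝓞 F)), Finite ((𝓞 F) ⧸ b) → ∀ (t : 𝓞 F) (N : ℕ), 1 ≤ N →
      (cosetF b t ∩ ballF F N ⊆ {t}) ∨
      ((Nat.card (cosetF b t ∩ ballF F N : Set (𝓞 F)) : ℝ) ≤
        (a * ((N:ℝ) + house (t:F)))^(finrank ℚ F) / (Nat.card ((𝓞 F) ⧸ b) : ℝ))) := by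
  classical
  obtain ⟨c2, hc2one, hc2⟩ := exists_coord_bound (F := F)
  obtain ⟨c1, hc1one, hc1⟩ := exists_house_bound (F := F)
  set n := finrank ℚ F with hn
  have hnpos : 0 < n := finrank_pos
  have hcard : Fintype.card (F →+* ℂ) = n := Embeddings.card F ℂ
  have hc1pos : (0:ℝ) < c1 := lt_of_lt_of_le one_pos hc1one
  have hc2pos : (0:ℝ) < c2 := lt_of_lt_of_le one_pos hc2one
  set a : ℝ := 4*c1*c2 + 2 with ha
  have hapos : (0:ℝ) < a := by nlinarith
  have haone : (1:ℝ) ≤ a := by nlinarith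
  -- the coordinate map
  set coords : 𝓞 F → ((F →+* ℂ) → ℤ) := fun x k => (basF F).repr x k with hcoords
  have hcoords_inj : Function.Injective coords := by
    intro x y hxy
    have : (basF F).repr x = (basF F).repr y := by
      ext k; exact congrFun hxy k
    exact (basF F).repr.injective this
  -- generic counting upper bound for subsets of the ball
  have main_count : ∀ (C : Set (𝓞 F)) (N : ℕ) (s : ℝ), 0 < s →
      (∀ x ∈ C, house (x:F) ≤ N) →
      (∀ x ∈ C, ∀ y ∈ C, x ≠ y → s ≤ house ((x:F) - (y:F))) →
      C.Finite ∧ (Nat.card C : ℝ) ≤ (2 * (c2*N) / (s/(2*c1)) + 2) ^ n := by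
    intro C N s hs hball hsep
    have h := grid_count (coords '' C) (c2*N) (s/(2*c1))
      (by positivity) (by positivity) ?_ ?_
    · obtain ⟨hfin, hcount⟩ := h
      have hCfin : C.Finite := Set.Finite.of_finite_image hfin hcoords_inj.injOn
      refine ⟨hCfin, ?_⟩
      have : Nat.card C = Nat.card (coords '' C) := by
        rw [Nat.card_coe_set_eq, Nat.card_coe_set_eq,
          Set.ncard_image_of_injective C hcoords_inj]
      rw [this, ← hcard]
      exact hcount
    · rintro _ ⟨x, hx, rfl⟩ k
      exact le_trans (hc2 x k) (mul_le_mul_of_nonneg_left (hball x hx) hc2pos.le)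
    · rintro _ ⟨x, hx, rfl⟩ _ ⟨y, hy, rfl⟩ hne
      have hxy : x ≠ y := fun h => hne (by rw [h])
      by_contra hcon
      push_neg at hcon
      have hall : ∀ k, |(((basF F).repr (x - y) k : ℤ) : ℝ)| ≤ s/(2*c1) := by
        intro k
        have := hcon k
        rw [map_sub] at *
        simp only [Finsupp.sub_apply]
        push_cast
        exact le_of_lt (this)
      have hhle : house ((x:F) - (y:F)) ≤ c1 * (s/(2*c1)) := by
        have h0 : ((x - y : 𝓞 F) : F) = (x:F) - (y:F) := by push_cast; ring
        rw [← h0]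
        exact hc1 (x - y) _ (by positivity) hall
      have : c1 * (s/(2*c1)) = s/2 := by field_simp
      rw [this] at hhle
      have := hsep x hx y hy hxy
      linarith
  -- ball finiteness and upper bound via coordinates, separation 1
  have ball_grid : ∀ N : ℕ, (ballF F N).Finite ∧
      (Nat.card (ballF F N) : ℝ) ≤ (2 * (c2*N) / 1 + 2) ^ n := by
    intro N
    have h := grid_count (coords '' (ballF F N)) (c2*N) 1 (by positivity) one_pos ?_ ?_
    · obtain ⟨hfin, hcount⟩ := h
      have hBfin : (ballF F N).Finite := Set.Finite.of_finite_image hfin hcoords_inj.injOn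
      refine ⟨hBfin, ?_⟩
      have : Nat.card (ballF F N) = Nat.card (coords '' (ballF F N)) := by
        rw [Nat.card_coe_set_eq, Nat.card_coe_set_eq,
          Set.ncard_image_of_injective _ hcoords_inj]
      rw [this, ← hcard]
      exact hcount
    · rintro _ ⟨x, hx, rfl⟩ k
      exact le_trans (hc2 x k) (mul_le_mul_of_nonneg_left hx hc2pos.le)
    · rintro _ ⟨x, hx, rfl⟩ _ ⟨y, hy, rfl⟩ hne
      have hxy : x ≠ y := fun h => hne (by rw [h])
      have : ∃ k, coords x k ≠ coords y k := by
        by_contra hcon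
        push_neg at hcon
        exact hxy (hcoords_inj (funext hcon))
      obtain ⟨k, hk⟩ := this
      refine ⟨k, ?_⟩
      have : (1:ℤ) ≤ |coords x k - coords y k| := Int.one_le_abs (sub_ne_zero.mpr hk)
      calc (1:ℝ) ≤ |((coords x k - coords y k : ℤ) : ℝ)| := by exact_mod_cast this
        _ = |((coords x k : ℝ) - (coords y k : ℝ))| := by push_cast; ring_nf
  refine ⟨a, haone, fun N => (ball_grid N).1, ?_, ?_, ?_⟩
  · -- lower bound
    intro N
    set M : ℕ := ⌊(N:ℝ)/c1⌋₊ with hM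
    set box : Finset ((F →+* ℂ) → ℤ) :=
      Fintype.piFinset (fun _ => Finset.Icc (-(M:ℤ)) (M:ℤ)) with hbox
    set ψ : ((F →+* ℂ) → ℤ) → 𝓞 F := fun v => (basF F).equivFun.symm v with hψ
    have hψinj : Function.Injective ψ := (basF F).equivFun.symm.injective
    have hψrepr : ∀ v k, (basF F).repr (ψ v) k = v k := by
      intro v k
      have : (basF F).equivFun (ψ v) = v := (basF F).equivFun.apply_symm_apply v
      calc (basF F).repr (ψ v) k = (basF F).equivFun (ψ v) k := by
            rw [Basis.equivFun_apply]
        _ = v k := by rw [this]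
    have himg : ψ '' ↑box ⊆ ballF F N := by
      rintro _ ⟨v, hv, rfl⟩
      have hvk : ∀ k, |((v k : ℤ) : ℝ)| ≤ (M:ℝ) := by
        intro k
        have := Fintype.mem_piFinset.mp hv k
        rw [Finset.mem_Icc] at this
        rw [abs_le]
        constructor <;> [exact_mod_cast this.1; exact_mod_cast this.2]
      have hh : house ((ψ v : 𝓞 F) : F) ≤ c1 * M := by
        refine hc1 (ψ v) (M:ℝ) (Nat.cast_nonneg M) ?_
        intro k; rw [hψrepr v k]; exact hvk k
      have : c1 * (M:ℝ) ≤ N := by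
        have h1 : (M:ℝ) ≤ (N:ℝ)/c1 := Nat.floor_le (by positivity)
        calc c1 * (M:ℝ) ≤ c1 * ((N:ℝ)/c1) := by
              exact mul_le_mul_of_nonneg_left h1 hc1pos.le
          _ = N := by field_simp
      exact le_trans hh this
    have hboxcard : box.card = (2*M+1) ^ n := by
      rw [hbox, Fintype.card_piFinset]
      have h1 : (Finset.Icc (-(M:ℤ)) (M:ℤ)).card = 2*M+1 := by
        rw [Int.card_Icc]
        have : ((M:ℤ) + 1 - (-(M:ℤ))) = ((2*M+1 : ℕ) : ℤ) := by push_cast; ring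
        rw [this, Int.toNat_natCast]
      simp only [h1, Finset.prod_const, Finset.card_univ, hcard]
    have hcardle : (box.card : ℝ) ≤ (Nat.card (ballF F N) : ℝ) := by
      have h1 : (ψ '' ↑box).ncard = box.card := by
        rw [Set.ncard_image_of_injective _ hψinj, Set.ncard_coe_finset]
      have h2 : (ψ '' ↑box).ncard ≤ (ballF F N).ncard :=
        Set.ncard_le_ncard himg (ball_grid N).1
      rw [Nat.card_coe_set_eq]
      exact_mod_cast (h1 ▸ h2)
    refine le_trans ?_ hcardle
    rw [hboxcard]
    push_cast
    refine pow_le_pow_left₀ (by positivity) ?_ n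
    have hca : c1 ≤ a := by nlinarith
    have h1 : (N:ℝ)/a ≤ (N:ℝ)/c1 := by gcongr
    have h2 : (N:ℝ)/c1 < (M:ℝ) + 1 := Nat.lt_floor_add_one _
    linarith [Nat.cast_nonneg (α := ℝ) M]
  · -- upper bound
    intro N
    refine le_trans (ball_grid N).2 ?_
    refine pow_le_pow_left₀ (by positivity) ?_ n
    rw [div_one, ha]
    have hNn : (0:ℝ) ≤ (N:ℝ) := Nat.cast_nonneg N
    nlinarith [mul_nonneg (mul_nonneg hc2pos.le hNn) (by linarith : (0:ℝ) ≤ 2*c1 - 1),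
      mul_pos hc1pos hc2pos]
  · -- coset dichotomy
    intro b hbfin t N hN
    haveI := hbfin
    haveI : Nonempty ((𝓞 F) ⧸ b) := ⟨0⟩
    set C := cosetF b t ∩ ballF F N with hC
    set D := Nat.card ((𝓞 F) ⧸ b) with hD
    have hD1 : 1 ≤ D := Nat.card_pos
    by_cases hex : ∃ x ∈ C, x ≠ t
    · right
      obtain ⟨x0, hx0C, hx0ne⟩ := hex
      set s : ℝ := (D:ℝ) ^ ((n:ℝ)⁻¹) with hs
      have hs1 : 1 ≤ s := by
        rw [hs]
        apply Real.one_le_rpow (by exact_mod_cast hD1) (by positivity)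
      have hspos : 0 < s := lt_of_lt_of_le one_pos hs1
      have hsn : s ^ n = (D:ℝ) := by
        rw [hs, ← Real.rpow_natCast ((D:ℝ) ^ ((n:ℝ)⁻¹)) n, ← Real.rpow_mul (by positivity)]
        rw [inv_mul_cancel₀ (by exact_mod_cast hnpos.ne')]
        exact Real.rpow_one _
      have hsep_house : ∀ y : 𝓞 F, y ∈ b → y ≠ 0 → s ≤ house (y:F) := by
        intro y hy hy0
        by_contra hcon
        push_neg at hcon
        have h1 : house (y:F) ^ n < s ^ n :=
          pow_lt_pow_left₀ hcon (house_nonneg _) hnpos.ne'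
        rw [hsn] at h1
        exact absurd (card_quot_le_house_pow b hy hy0) (not_le.mpr h1)
      have hcm := main_count C N s hspos ?_ ?_
      · obtain ⟨hCfin, hcount⟩ := hcm
        refine le_trans hcount ?_
        set R0 : ℝ := (N:ℝ) + house (t:F) with hR0
        have hR0pos : 0 < R0 := by
          have := house_nonneg (t:F)
          have : (1:ℝ) ≤ (N:ℝ) := by exact_mod_cast hN
          positivity
        have hsR0 : s ≤ R0 := by
          have h1 : x0 - t ∈ b := hx0C.1
          have h2 : x0 - t ≠ 0 := sub_ne_zero.mpr hx0ne
          have h3 := hsep_house _ h1 h2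
          have h4 : ((x0 - t : 𝓞 F) : F) = (x0:F) - (t:F) := by push_cast; ring
          rw [h4] at h3
          have h5 : house ((x0:F) - (t:F)) ≤ house (x0:F) + house (t:F) := house_sub_le _ _
          have h6 : house (x0:F) ≤ N := hx0C.2
          rw [hR0]; linarith
        have key : 2 * (c2*N) / (s/(2*c1)) + 2 ≤ a * R0 / s := by
          have e1 : 2 * (c2*(N:ℝ)) / (s/(2*c1)) = 4*c1*c2*(N:ℝ)/s := by
            field_simp; ring
          rw [e1]
          have e2 : (2:ℝ) ≤ 2 * R0 / s := by
            rw [le_div_iff₀ hspos]; linarith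
          have e3 : 4*c1*c2*(N:ℝ)/s ≤ 4*c1*c2*R0/s := by
            have hNR : (N:ℝ) ≤ R0 := by rw [hR0]; linarith [house_nonneg (t:F)]
            apply div_le_div_of_nonneg_right ?_ hspos.le
            nlinarith [mul_nonneg (mul_nonneg hc1pos.le hc2pos.le) (by linarith : (0:ℝ) ≤ R0 - (N:ℝ))]
          have e4 : a * R0 / s = 4*c1*c2*R0/s + 2*R0/s := by
            rw [ha]; field_simp
          linarith
        calc (2 * (c2*(N:ℝ)) / (s/(2*c1)) + 2) ^ n ≤ (a * R0 / s) ^ n := by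
              refine pow_le_pow_left₀ (by positivity) key n
          _ = (a * R0) ^ n / s ^ n := div_pow _ _ _
          _ = (a * ((N:ℝ) + house (t:F))) ^ n / (D:ℝ) := by rw [hsn, hR0]
      · intro x hx; exact hx.2
      · intro x hx y hy hxy
        have h1 : (x - y : 𝓞 F) ∈ b := by
          have := Ideal.sub_mem b hx.1 hy.1
          simpa using this
        have h2 : (x - y : 𝓞 F) ≠ 0 := sub_ne_zero.mpr hxy
        have h3 := hsep_house _ h1 h2
        have h4 : ((x - y : 𝓞 F) : F) = (x:F) - (y:F) := by push_cast; ring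
        rw [h4] at h3
        exact h3
    · left
      intro x hx
      push_neg at hex
      exact hex x hx


/-- card of a pi set -/
lemma card_univ_pi {m : ℕ} {α : Fin m → Type} (s : ∀ j, Set (α j)) :
    Nat.card (Set.univ.pi s) = ∏ j, Nat.card (s j) := by
  rw [← Nat.card_pi]
  refine Nat.card_congr ?_
  exact
  { toFun := fun x j => ⟨x.1 j, x.2 j (Set.mem_univ j)⟩
    invFun := fun y => ⟨fun j => (y j).1, fun j _ => (y j).2⟩
    left_inv := fun x => by ext j; rfl
    right_inv := fun y => by ext j; rfl }

variable {m : ℕ} {K : Fin m → Type} [∀ j, Field (K j)] [∀ j, NumberField (K j)]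



def comp (b : Ideal ((j : Fin m) → 𝓞 (K j))) (j : Fin m) : Ideal (𝓞 (K j)) :=
  Ideal.map (Pi.evalRingHom (fun j => 𝓞 (K j)) j) b

lemma eval_surj (j : Fin m) :
    Function.Surjective (Pi.evalRingHom (fun j => 𝓞 (K j)) j) := by
  intro z
  classical
  exact ⟨Pi.single j z, by simp⟩

lemma mem_comp_iff (b : Ideal ((j : Fin m) → 𝓞 (K j))) (x : ((j : Fin m) → 𝓞 (K j))) : x ∈ b ↔ ∀ j, x j ∈ comp b j := by
  classical
  constructor
  · intro hx j
    exact Ideal.mem_map_of_mem _ hx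
  · intro h
    choose y hy hyx using fun j => (Ideal.mem_map_iff_of_surjective (Pi.evalRingHom (fun j => 𝓞 (K j)) j) (eval_surj j)).mp (h j)
    have hxe : x = ∑ j, Pi.single j (1 : 𝓞 (K j)) * y j := by
      funext k
      rw [Finset.sum_apply]
      rw [Finset.sum_eq_single k]
      · simp only [Pi.mul_apply, Pi.single_eq_same, one_mul]
        exact (hyx k).symm
      · intro j _ hjk
        simp [Pi.single_apply, Ne.symm hjk]
      · intro h; exact absurd (Finset.mem_univ k) h
    rw [hxe]
    exact Ideal.sum_mem b (fun j _ => Ideal.mul_mem_left b _ (hy j))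

lemma finite_comp (b : Ideal ((j : Fin m) → 𝓞 (K j))) (hb : Finite (((j : Fin m) → 𝓞 (K j)) ⧸ b)) (j : Fin m) :
    Finite (𝓞 (K j) ⧸ comp b j) := by
  haveI := hb
  have hle : b ≤ Ideal.comap (Pi.evalRingHom (fun j => 𝓞 (K j)) j) (comp b j) :=
    Ideal.le_comap_map
  set g : (((j : Fin m) → 𝓞 (K j)) ⧸ b) →+* (𝓞 (K j) ⧸ comp b j) :=
    Ideal.Quotient.lift b ((Ideal.Quotient.mk (comp b j)).comp
      (Pi.evalRingHom (fun j => 𝓞 (K j)) j))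
      (fun a ha => by
        rw [RingHom.comp_apply, Ideal.Quotient.eq_zero_iff_mem]
        exact hle ha) with hg
  have hsurj : Function.Surjective g := by
    intro z
    obtain ⟨w, rfl⟩ := Ideal.Quotient.mk_surjective z
    obtain ⟨v, rfl⟩ := eval_surj j w
    exact ⟨Ideal.Quotient.mk b v, rfl⟩
  exact Finite.of_surjective g hsurj

lemma card_comp_le (b : Ideal ((j : Fin m) → 𝓞 (K j))) (hb : Finite (((j : Fin m) → 𝓞 (K j)) ⧸ b)) :
    Nat.card (((j : Fin m) → 𝓞 (K j)) ⧸ b) ≤ ∏ j, Nat.card (𝓞 (K j) ⧸ comp b j) := by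
  haveI := hb
  haveI := fun j => finite_comp b hb j
  set Φ : ((j : Fin m) → 𝓞 (K j)) →+* ∀ j, (𝓞 (K j) ⧸ comp b j) :=
    Pi.ringHom (fun j => (Ideal.Quotient.mk (comp b j)).comp
      (Pi.evalRingHom (fun j => 𝓞 (K j)) j)) with hΦ
  have hbker : ∀ a ∈ b, Φ a = 0 := by
    intro a ha
    have := (mem_comp_iff b a).mp ha
    funext j
    rw [hΦ]
    show Ideal.Quotient.mk (comp b j) (a j) = 0
    rw [Ideal.Quotient.eq_zero_iff_mem]
    exact this j
  set Ψ : (((j : Fin m) → 𝓞 (K j)) ⧸ b) →+* (∀ j, 𝓞 (K j) ⧸ comp b j) :=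
    Ideal.Quotient.lift b Φ hbker with hΨ
  have hinj : Function.Injective Ψ := by
    rw [RingHom.injective_iff_ker_eq_bot, RingHom.ker_eq_bot_iff_eq_zero]
    intro z hz
    obtain ⟨w, rfl⟩ := Ideal.Quotient.mk_surjective z
    rw [hΨ, Ideal.Quotient.lift_mk] at hz
    rw [Ideal.Quotient.eq_zero_iff_mem]
    rw [mem_comp_iff]
    intro j
    have := congrFun hz j
    rw [← Ideal.Quotient.eq_zero_iff_mem]
    exact this
  calc Nat.card (((j : Fin m) → 𝓞 (K j)) ⧸ b) ≤ Nat.card (∀ j, 𝓞 (K j) ⧸ comp b j) :=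
        Nat.card_le_card_of_injective Ψ hinj
    _ = ∏ j, Nat.card (𝓞 (K j) ⧸ comp b j) := Nat.card_pi


end ErdosAux

lemma ncard_biUnion_le {α β : Type} (s : Finset β) (f : β → Set α)
    (hf : ∀ b, (f b).Finite) :
    (((⋃ b ∈ s, f b).ncard : ℕ) : ℝ) ≤ ∑ b ∈ s, ((f b).ncard : ℝ) := by
  classical
  induction s using Finset.induction with
  | empty => simp
  | @insert c s hc ih =>
    rw [Finset.sum_insert hc]
    have hu : ⋃ b ∈ insert c s, f b = f c ∪ ⋃ b ∈ s, f b := by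
      simp [Set.biUnion_insert]
    rw [hu]
    have h2 := Set.ncard_union_le (f c) (⋃ b ∈ s, f b)
    have h3 : ((f c ∪ ⋃ b ∈ s, f b).ncard : ℝ) ≤ ((f c).ncard : ℝ) + ((⋃ b ∈ s, f b).ncard : ℝ) := by
      exact_mod_cast h2
    linarith

lemma exists_unif_bound {α β : Type} [Fintype β] (T : Finset α) (f : α → β → ℝ)
    (hf : ∀ a b, 0 ≤ f a b) : ∃ H : ℝ, 1 ≤ H ∧ ∀ a ∈ T, ∀ b, f a b ≤ H := by
  refine ⟨1 + ∑ a ∈ T, ∑ b, f a b, ?_, ?_⟩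
  · have : (0:ℝ) ≤ ∑ a ∈ T, ∑ b, f a b :=
      Finset.sum_nonneg (fun a _ => Finset.sum_nonneg (fun b _ => hf a b))
    linarith
  · intro a ha b
    have h1 : f a b ≤ ∑ b', f a b' :=
      Finset.single_le_sum (fun b' _ => hf a b') (Finset.mem_univ b)
    have h2 : ∑ b', f a b' ≤ ∑ a' ∈ T, ∑ b', f a' b' :=
      Finset.single_le_sum (fun a' _ => Finset.sum_nonneg (fun b' _ => hf a' b')) ha
    linarith

end ErdosAuxSection

open NumberField in
set_option maxHeartbeats 1000000 in
set_option synthInstance.maxHeartbeats 400000 in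
/-- **Strong light tails for `B`-free–type sieves over étale `ℚ`-algebras.** If all the sets
`R_i` are contained in `T + b_i` for a single finite set `T` and `∑ 1/N(b_i) < ∞`, then the
sieve is Erdős and has strong light tails for the Følner sequence of balls `B_N`. -/
theorem strong_light_tails_of_bounded_reps_etale
    {m : ℕ} (hm : 0 < m) (K : Fin m → Type) [∀ j, Field (K j)]
    [∀ j, NumberField (K j)]
    (S : Sieve (OK K)) (T : Finset (OK K))
    (hT : ∀ i, S.RSet i ⊆ (↑T : Set (OK K)) + (↑(S.b i) : Set (OK K)))
    (hsum : Summable fun i => 1 / (S.normb i : ℝ)) :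
    S.HasStrongLightTails (fun N => ball K N) := by
  classical
  -- per-field constants
  choose a ha1 hbfin hblow hbup hcos using fun j : Fin m => ErdosAux.field_consts (K j)
  set n : ℕ := ∑ j, Module.finrank ℚ (K j) with hn
  have hnj : ∀ j, 1 ≤ Module.finrank ℚ (K j) := fun j => Module.finrank_pos
  have hn1 : 1 ≤ n := by
    calc 1 ≤ m := hm
      _ = ∑ _j : Fin m, 1 := by simp
      _ ≤ n := Finset.sum_le_sum (fun j _ => hnj j)
  have hanneg : ∀ j, 0 < a j := fun j => lt_of_lt_of_le one_pos (ha1 j)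
  set A : ℝ := 1 + ∑ j, a j with hA
  have hAj : ∀ j, a j ≤ A := by
    intro j
    rw [hA]
    have h1 : a j ≤ ∑ k, a k :=
      Finset.single_le_sum (fun k _ => (hanneg k).le) (Finset.mem_univ j)
    linarith
  have hA1 : 1 ≤ A := by
    rw [hA]
    have : (0:ℝ) ≤ ∑ k, a k := Finset.sum_nonneg (fun k _ => (hanneg k).le)
    linarith
  have hApos : 0 < A := lt_of_lt_of_le one_pos hA1
  obtain ⟨H, hH1, hHt⟩ := exists_unif_bound T (fun t j => house ((t j : K j)))
    (fun t j => house_nonneg _)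
  -- ball facts
  have hball : ∀ N : ℕ, ball K N = Set.univ.pi (fun j => ErdosAux.ballF (K j) N) := by
    intro N
    ext x
    simp only [ball, Set.mem_setOf_eq, Set.mem_pi, Set.mem_univ, forall_true_left]
    refine forall_congr' (fun j => ?_)
    rw [ErdosAux.mem_ballF_iff]
  have hballfin : ∀ N, (ball K N).Finite := by
    intro N
    rw [hball N]
    exact Set.Finite.pi (fun j => hbfin j N)
  have hballlow : ∀ N : ℕ, ((N:ℝ)/A)^n ≤ (Nat.card ↥(ball K N) : ℝ) := by
    intro N
    rw [hball N, ErdosAux.card_univ_pi]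
    push_cast
    calc ((N:ℝ)/A)^n = ∏ j, ((N:ℝ)/A)^(Module.finrank ℚ (K j)) := by
          rw [Finset.prod_pow_eq_pow_sum, hn]
      _ ≤ ∏ j, (Nat.card ↥(ErdosAux.ballF (K j) N) : ℝ) := by
          refine Finset.prod_le_prod (fun j _ => by positivity) (fun j _ => ?_)
          refine le_trans ?_ (hblow j N)
          refine pow_le_pow_left₀ (by positivity) ?_ _
          have h0 := hanneg j
          have h1 := hAj j
          gcongr
  have hballpos : ∀ N, 0 < (Nat.card ↥(ball K N) : ℝ) := by
    intro N
    rw [Nat.card_coe_set_eq]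
    have : (0:OK K) ∈ ball K N := by
      intro j φ
      simp
    exact_mod_cast (Set.ncard_pos (hballfin N)).mpr ⟨0, this⟩
  have hD1 : ∀ i, 1 ≤ S.normb i := by
    intro i
    haveI := S.finQuot i
    haveI : Nonempty (OK K ⧸ S.b i) := ⟨0⟩
    exact Nat.card_pos
  have hDpos : ∀ i, (0:ℝ) < (S.normb i : ℝ) := fun i => by exact_mod_cast hD1 i
  -- Part 1 : Erdős
  have herdos : S.IsErdos := by
    refine Summable.of_nonneg_of_le (fun i => by positivity) (fun i => ?_)
      (hsum.mul_left (T.card : ℝ))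
    rw [mul_one_div]
    refine div_le_div_of_nonneg_right ?_ (hDpos i).le
    have hsub : (Ideal.Quotient.mk (S.b i)) '' (S.RSet i) ⊆
        (Ideal.Quotient.mk (S.b i)) '' (↑T : Set (OK K)) := by
      rintro _ ⟨x, hx, rfl⟩
      obtain ⟨t, ht, β, hβ, hadd⟩ := Set.mem_add.mp (hT i hx)
      refine ⟨t, ht, ?_⟩
      rw [← hadd, map_add, Ideal.Quotient.eq_zero_iff_mem.mpr hβ, add_zero]
    have h1 : S.cardR i ≤ T.card := by
      rw [Sieve.cardR, Nat.card_coe_set_eq]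
      calc ((Ideal.Quotient.mk (S.b i)) '' (S.RSet i)).ncard
          ≤ ((Ideal.Quotient.mk (S.b i)) '' (↑T : Set (OK K))).ncard :=
            Set.ncard_le_ncard hsub (T.finite_toSet.image _)
        _ ≤ (↑T : Set (OK K)).ncard := Set.ncard_image_le T.finite_toSet
        _ = T.card := Set.ncard_coe_finset T
    exact_mod_cast h1
  refine ⟨herdos, ?_⟩
  -- tail sums
  set tail : ℕ → ℝ := fun L => ∑' i : ℕ, 1 / (S.normb (i + L) : ℝ) with htaildef
  have hsumL : ∀ L, Summable (fun i => 1 / (S.normb (i + L) : ℝ)) :=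
    fun L => (summable_nat_add_iff L).mpr hsum
  have htail0 : Tendsto tail atTop (𝓝 0) :=
    tendsto_sum_nat_add (fun i => 1 / (S.normb i : ℝ))
  have htailnn : ∀ L, 0 ≤ tail L := fun L => tsum_nonneg (fun i => by positivity)
  -- THE KEY COUNTING BOUND
  have key : ∀ L N : ℕ, 1 ≤ N →
      (Nat.card ↥(unionGe S.RSet L ∩ ball K N) : ℝ) ≤
        (T.card : ℝ) * m * (A*((N:ℝ)+1))^(n-1)
          + (T.card : ℝ) * (A*((N:ℝ)+H))^n * tail L := by
    intro L N hN
    set bc : ℕ → ∀ j, Ideal (NumberField.RingOfIntegers (K j)) :=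
      fun i j => ErdosAux.comp (S.b i) j with hbc
    have hfc : ∀ i j, Finite (NumberField.RingOfIntegers (K j) ⧸ bc i j) :=
      fun i j => ErdosAux.finite_comp _ (S.finQuot i) j
    set Cit : ℕ → OK K → Set (OK K) := fun i t =>
      Set.univ.pi (fun j => ErdosAux.cosetF (bc i j) (t j) ∩ ErdosAux.ballF (K j) N)
      with hCit
    set Slice : Set (OK K) := ball K N ∩ {x | ∃ j, ∃ t ∈ T, x j = t j} with hSlice
    have hSlicefin : Slice.Finite := (hballfin N).subset Set.inter_subset_left
    have hCitfin : ∀ i t, (Cit i t).Finite := fun i t =>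
      Set.Finite.pi (fun j => (hbfin j N).subset Set.inter_subset_right)
    -- covering
    have hcover : ∀ x ∈ unionGe S.RSet L ∩ ball K N,
        ∃ p : ℕ × OK K, (L ≤ p.1 ∧ p.2 ∈ T) ∧ x ∈ Cit p.1 p.2 := by
      rintro x ⟨hxU, hxB⟩
      obtain ⟨i, hi, hxi⟩ := Set.mem_iUnion₂.mp hxU
      obtain ⟨t, ht, β, hβ, hadd⟩ := Set.mem_add.mp (hT i hxi)
      refine ⟨(i, t), ⟨hi, ht⟩, ?_⟩
      intro j _
      constructor
      · show x j - t j ∈ bc i j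
        have hxt : x - t ∈ S.b i := by
          have hxβ : x - t = β := by rw [← hadd]; ring
          rw [hxβ]; exact hβ
        exact ((ErdosAux.mem_comp_iff (S.b i) (x - t)).mp hxt) j
      · rw [hball N] at hxB
        exact hxB j (Set.mem_univ j)
    -- per-pair bound
    have hper : ∀ i : ℕ, ∀ t ∈ T, (((Cit i t) \ Slice).ncard : ℝ) ≤
        (A*((N:ℝ)+H))^n / (S.normb i : ℝ) := by
      intro i t htT
      by_cases hbad : ∃ j, ErdosAux.cosetF (bc i j) (t j) ∩ ErdosAux.ballF (K j) N ⊆ {t j}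
      · obtain ⟨j, hj⟩ := hbad
        have hsub : Cit i t ⊆ Slice := by
          intro x hx
          refine ⟨?_, ⟨j, t, htT, hj (hx j (Set.mem_univ j))⟩⟩
          rw [hball N]
          exact fun k _ => (hx k (Set.mem_univ k)).2
        have hempty : (Cit i t) \ Slice = ∅ := Set.diff_eq_empty.mpr hsub
        rw [hempty]
        simp only [Set.ncard_empty, Nat.cast_zero]
        positivity
      · push_neg at hbad
        have hjb : ∀ j, (Nat.card ↥(ErdosAux.cosetF (bc i j) (t j) ∩
              ErdosAux.ballF (K j) N) : ℝ) ≤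
            (a j * ((N:ℝ) + house ((t j : K j))))^(Module.finrank ℚ (K j)) /
              (Nat.card (NumberField.RingOfIntegers (K j) ⧸ bc i j) : ℝ) :=
          fun j => (hcos j (bc i j) (hfc i j) (t j) N hN).resolve_left (hbad j)
        have hDij1 : ∀ j, 1 ≤ Nat.card (NumberField.RingOfIntegers (K j) ⧸ bc i j) := by
          intro j
          haveI := hfc i j
          haveI : Nonempty (NumberField.RingOfIntegers (K j) ⧸ bc i j) := ⟨0⟩
          exact Nat.card_pos
        calc (((Cit i t) \ Slice).ncard : ℝ) ≤ ((Cit i t).ncard : ℝ) := by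
              exact_mod_cast Set.ncard_le_ncard Set.diff_subset (hCitfin i t)
          _ = ∏ j, (Nat.card ↥(ErdosAux.cosetF (bc i j) (t j) ∩
                ErdosAux.ballF (K j) N) : ℝ) := by
              rw [← Nat.card_coe_set_eq, hCit, ErdosAux.card_univ_pi]
              push_cast
              rfl
          _ ≤ ∏ j, ((a j * ((N:ℝ) + house ((t j : K j))))^(Module.finrank ℚ (K j)) /
                (Nat.card (NumberField.RingOfIntegers (K j) ⧸ bc i j) : ℝ)) :=
              Finset.prod_le_prod (fun j _ => by positivity) (fun j _ => hjb j)
          _ = (∏ j, (a j * ((N:ℝ) + house ((t j : K j))))^(Module.finrank ℚ (K j))) /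
                (∏ j, (Nat.card (NumberField.RingOfIntegers (K j) ⧸ bc i j) : ℝ)) :=
              Finset.prod_div_distrib _ _
          _ ≤ (A*((N:ℝ)+H))^n / (S.normb i : ℝ) := by
              have hnum : (∏ j, (a j * ((N:ℝ) + house ((t j : K j))))^(Module.finrank ℚ (K j)))
                  ≤ (A*((N:ℝ)+H))^n := by
                calc ∏ j, (a j * ((N:ℝ) + house ((t j : K j))))^(Module.finrank ℚ (K j))
                    ≤ ∏ j, (A*((N:ℝ)+H))^(Module.finrank ℚ (K j)) := by
                      refine Finset.prod_le_prod (fun j _ => pow_nonneg (mul_nonneg (hanneg j).le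
                        (add_nonneg (Nat.cast_nonneg N) (house_nonneg _))) _) (fun j _ => ?_)
                      refine pow_le_pow_left₀ (mul_nonneg (hanneg j).le
                        (add_nonneg (Nat.cast_nonneg N) (house_nonneg _))) ?_ _
                      have h1 := hHt t htT j
                      have h2 := hAj j
                      have h3 := house_nonneg ((t j : K j))
                      nlinarith [hanneg j, Nat.cast_nonneg (α := ℝ) N, hApos]
                  _ = (A*((N:ℝ)+H))^n := by rw [Finset.prod_pow_eq_pow_sum, hn]
              have hden : (S.normb i : ℝ) ≤
                  ∏ j, (Nat.card (NumberField.RingOfIntegers (K j) ⧸ bc i j) : ℝ) := by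
                have := ErdosAux.card_comp_le (S.b i) (S.finQuot i)
                rw [Sieve.normb]
                exact_mod_cast this
              refine div_le_div₀ (pow_nonneg (mul_nonneg hApos.le
                (add_nonneg (Nat.cast_nonneg N) (by linarith))) _) hnum (hDpos i) hden
    -- slice bound
    have hslice : ((Slice.ncard : ℕ) : ℝ) ≤ (T.card : ℝ) * m * (A*((N:ℝ)+1))^(n-1) := by
      have hsl1 : Slice ⊆ ⋃ p ∈ (Finset.univ ×ˢ T : Finset (Fin m × OK K)),
          (ball K N ∩ {x : OK K | x p.1 = p.2 p.1}) := by
        rintro x ⟨hxB, j, t, htT, hxj⟩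
        exact Set.mem_iUnion₂.mpr ⟨(j, t),
          Finset.mem_product.mpr ⟨Finset.mem_univ j, htT⟩, hxB, hxj⟩
      have hperp : ∀ p : Fin m × OK K,
          ((ball K N ∩ {x : OK K | x p.1 = p.2 p.1}).ncard : ℝ) ≤ (A*((N:ℝ)+1))^(n-1) := by
        rintro ⟨j, t⟩
        set s : ∀ k, Set (NumberField.RingOfIntegers (K k)) :=
          Function.update (fun k => ErdosAux.ballF (K k) N) j ({t j}) with hs
        have hsfin : ∀ k, (s k).Finite := by
          intro k
          by_cases hk : k = j
          · subst hk; rw [hs, Function.update_self]; exact Set.finite_singleton _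
          · rw [hs, Function.update_of_ne hk]; exact hbfin k N
        have hsub : ball K N ∩ {x : OK K | x j = t j} ⊆ Set.univ.pi s := by
          rintro x ⟨hxB, hxj⟩
          intro k _
          by_cases hk : k = j
          · subst hk; rw [hs, Function.update_self]; exact hxj
          · rw [hs, Function.update_of_ne hk]
            rw [hball N] at hxB
            exact hxB k (Set.mem_univ k)
        calc ((ball K N ∩ {x : OK K | x j = t j}).ncard : ℝ)
            ≤ ((Set.univ.pi s).ncard : ℝ) := by
              exact_mod_cast Set.ncard_le_ncard hsub (Set.Finite.pi hsfin)
          _ = ∏ k, (Nat.card ↥(s k) : ℝ) := by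
              rw [← Nat.card_coe_set_eq, ErdosAux.card_univ_pi]
              push_cast
              rfl
          _ = (Nat.card ↥({t j} : Set (NumberField.RingOfIntegers (K j))) : ℝ) *
                ∏ k ∈ Finset.univ.erase j, (Nat.card ↥(s k) : ℝ) := by
              rw [← Finset.mul_prod_erase Finset.univ _ (Finset.mem_univ j), hs,
                Function.update_self]
          _ ≤ 1 * ∏ k ∈ Finset.univ.erase j, (A*((N:ℝ)+1))^(Module.finrank ℚ (K k)) := by
              refine mul_le_mul ?_ ?_ ?_ zero_le_one
              · rw [Nat.card_coe_set_eq, Set.ncard_singleton]; norm_num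
              · refine Finset.prod_le_prod (fun k _ => Nat.cast_nonneg _) (fun k hk => ?_)
                have hkj : k ≠ j := Finset.ne_of_mem_erase hk
                rw [hs, Function.update_of_ne hkj]
                refine le_trans (hbup k N) ?_
                refine pow_le_pow_left₀ (mul_nonneg (hanneg k).le
                  (by positivity)) ?_ _
                nlinarith [hAj k, hanneg k, Nat.cast_nonneg (α := ℝ) N, hApos]
              · exact Finset.prod_nonneg (fun k _ => Nat.cast_nonneg _)
          _ ≤ (A*((N:ℝ)+1))^(n-1) := by
              rw [one_mul, Finset.prod_pow_eq_pow_sum]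
              have hbase : (1:ℝ) ≤ A*((N:ℝ)+1) := by nlinarith [Nat.cast_nonneg (α := ℝ) N]
              refine pow_le_pow_right₀ hbase ?_
              have hsumerase : (∑ k ∈ Finset.univ.erase j, Module.finrank ℚ (K k))
                  + Module.finrank ℚ (K j) = n := by
                rw [hn]
                exact Finset.sum_erase_add _ _ (Finset.mem_univ j)
              have := hnj j
              omega
      have hfinper : ∀ p : Fin m × OK K,
          (ball K N ∩ {x : OK K | x p.1 = p.2 p.1}).Finite :=
        fun p => (hballfin N).subset Set.inter_subset_left
      calc ((Slice.ncard : ℕ) : ℝ)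
          ≤ ((⋃ p ∈ (Finset.univ ×ˢ T : Finset (Fin m × OK K)),
              (ball K N ∩ {x : OK K | x p.1 = p.2 p.1})).ncard : ℝ) := by
            exact_mod_cast Set.ncard_le_ncard hsl1
              (Set.Finite.biUnion (Finset.univ ×ˢ T).finite_toSet (fun p _ => hfinper p))
        _ ≤ ∑ p ∈ (Finset.univ ×ˢ T : Finset (Fin m × OK K)),
              ((ball K N ∩ {x : OK K | x p.1 = p.2 p.1}).ncard : ℝ) :=
            ncard_biUnion_le _ _ (fun p => hfinper p)
        _ ≤ ∑ _p ∈ (Finset.univ ×ˢ T : Finset (Fin m × OK K)), (A*((N:ℝ)+1))^(n-1) :=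
            Finset.sum_le_sum (fun p _ => hperp p)
        _ = (T.card : ℝ) * m * (A*((N:ℝ)+1))^(n-1) := by
            rw [Finset.sum_const, Finset.card_product, Finset.card_univ, Fintype.card_fin]
            push_cast
            ring
    -- truncation
    set U : Set (OK K) := unionGe S.RSet L ∩ ball K N with hU
    have hUfin : U.Finite := (hballfin N).subset Set.inter_subset_right
    have hWfin : (U \ Slice).Finite := hUfin.subset Set.diff_subset
    have hWsub : ∀ x ∈ U \ Slice, ∃ p : ℕ × OK K,
        (L ≤ p.1 ∧ p.2 ∈ T) ∧ x ∈ (Cit p.1 p.2) \ Slice := by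
      rintro x ⟨hxU, hxS⟩
      obtain ⟨p, hp1, hp2⟩ := hcover x hxU
      exact ⟨p, hp1, hp2, hxS⟩
    choose! p hp using hWsub
    set M : ℕ := (hWfin.toFinset.image (fun x => (p x).1)).sup id + 1 with hM
    have hMlt : ∀ x ∈ U \ Slice, (p x).1 < M := by
      intro x hx
      have h1 : (p x).1 ∈ hWfin.toFinset.image (fun x => (p x).1) :=
        Finset.mem_image_of_mem _ (hWfin.mem_toFinset.mpr hx)
      have h2 := Finset.le_sup (f := id) h1
      simp only [id_eq] at h2
      omega
    have hWcover : U \ Slice ⊆ ⋃ q ∈ (Finset.Ico L M ×ˢ T : Finset (ℕ × OK K)),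
        ((Cit q.1 q.2) \ Slice) := by
      intro x hx
      exact Set.mem_iUnion₂.mpr ⟨p x,
        Finset.mem_product.mpr ⟨Finset.mem_Ico.mpr ⟨(hp x hx).1.1, hMlt x hx⟩,
          (hp x hx).1.2⟩, (hp x hx).2⟩
    have hWcard : ((U \ Slice).ncard : ℝ) ≤
        ∑ q ∈ (Finset.Ico L M ×ˢ T : Finset (ℕ × OK K)), (((Cit q.1 q.2) \ Slice).ncard : ℝ) := by
      refine le_trans ?_ (ncard_biUnion_le _ _
        (fun q => (hCitfin q.1 q.2).subset Set.diff_subset))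
      exact_mod_cast Set.ncard_le_ncard hWcover
        (Set.Finite.biUnion (Finset.Ico L M ×ˢ T).finite_toSet
          (fun q _ => (hCitfin q.1 q.2).subset Set.diff_subset))
    have hIco : ∑ i ∈ Finset.Ico L M, 1/(S.normb i : ℝ) ≤ tail L := by
      rw [Finset.sum_Ico_eq_sum_range]
      have h1 : ∀ i, (fun i => 1/(S.normb (L + i) : ℝ)) i = 1/(S.normb (i + L) : ℝ) := by
        intro i; rw [Nat.add_comm]
      calc ∑ i ∈ Finset.range (M - L), 1/(S.normb (L + i) : ℝ)
          = ∑ i ∈ Finset.range (M - L), 1/(S.normb (i + L) : ℝ) :=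
            Finset.sum_congr rfl (fun i _ => h1 i)
        _ ≤ tail L := Summable.sum_le_tsum _ (fun i _ => by positivity) (hsumL L)
    have hWfinal : ((U \ Slice).ncard : ℝ) ≤ (T.card : ℝ) * (A*((N:ℝ)+H))^n * tail L := by
      refine le_trans hWcard ?_
      calc ∑ q ∈ (Finset.Ico L M ×ˢ T : Finset (ℕ × OK K)), (((Cit q.1 q.2) \ Slice).ncard : ℝ)
          ≤ ∑ q ∈ (Finset.Ico L M ×ˢ T : Finset (ℕ × OK K)),
              (A*((N:ℝ)+H))^n / (S.normb q.1 : ℝ) := by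
            refine Finset.sum_le_sum (fun q hq => ?_)
            exact hper q.1 q.2 (Finset.mem_product.mp hq).2
        _ = ∑ i ∈ Finset.Ico L M, ∑ _t ∈ T, (A*((N:ℝ)+H))^n / (S.normb i : ℝ) := by
            rw [Finset.sum_product]
        _ = (T.card : ℝ) * ∑ i ∈ Finset.Ico L M, (A*((N:ℝ)+H))^n * (1/(S.normb i : ℝ)) := by
            rw [Finset.mul_sum]
            refine Finset.sum_congr rfl (fun i _ => ?_)
            rw [Finset.sum_const]
            push_cast
            ring
        _ = (T.card : ℝ) * ((A*((N:ℝ)+H))^n * ∑ i ∈ Finset.Ico L M, (1/(S.normb i : ℝ))) := by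
            rw [← Finset.mul_sum]
        _ ≤ (T.card : ℝ) * ((A*((N:ℝ)+H))^n * tail L) := by
            refine mul_le_mul_of_nonneg_left ?_ (Nat.cast_nonneg _)
            refine mul_le_mul_of_nonneg_left hIco (by positivity)
        _ = (T.card : ℝ) * (A*((N:ℝ)+H))^n * tail L := by ring
    -- combine
    have hsplit : ((U.ncard : ℕ) : ℝ) ≤ ((Slice.ncard : ℕ) : ℝ) + ((U \ Slice).ncard : ℝ) := by
      have hsub : U ⊆ Slice ∪ (U \ Slice) := by
        intro x hx
        by_cases hxs : x ∈ Slice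
        · exact Or.inl hxs
        · exact Or.inr ⟨hx, hxs⟩
      have h1 : U.ncard ≤ (Slice ∪ (U \ Slice)).ncard :=
        Set.ncard_le_ncard hsub (hSlicefin.union hWfin)
      have h2 := Set.ncard_union_le Slice (U \ Slice)
      push_cast
      exact_mod_cast le_trans h1 h2
    rw [Nat.card_coe_set_eq]
    calc ((unionGe S.RSet L ∩ ball K N).ncard : ℝ) = ((U.ncard : ℕ) : ℝ) := by rw [hU]
      _ ≤ ((Slice.ncard : ℕ) : ℝ) + ((U \ Slice).ncard : ℝ) := hsplit
      _ ≤ (T.card : ℝ) * m * (A*((N:ℝ)+1))^(n-1)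
          + (T.card : ℝ) * (A*((N:ℝ)+H))^n * tail L := add_le_add hslice hWfinal
  -- from counting to upper density
  set u : ℕ → ℕ → ℝ := fun L N =>
    (Nat.card ↥(unionGe S.RSet L ∩ ball K N) : ℝ) / (Nat.card ↥(ball K N) : ℝ) with hu
  have hunn : ∀ L N, 0 ≤ u L N := fun L N => by
    rw [hu]; positivity
  have hub1 : ∀ L N, u L N ≤ 1 := by
    intro L N
    rw [hu]
    refine div_le_one_of_le₀ ?_ (hballpos N).le
    rw [Nat.card_coe_set_eq, Nat.card_coe_set_eq]
    exact_mod_cast Set.ncard_le_ncard Set.inter_subset_right (hballfin N)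
  set K2 : ℝ := (T.card : ℝ) * (2*A)^n * A^n with hK2
  set K1 : ℝ := (T.card : ℝ) * m * (2*A)^(n-1) * A^n with hK1
  have hq : ∀ L, ∀ N : ℕ, max 1 ⌈H⌉₊ ≤ N → u L N ≤ K1 / N + K2 * tail L := by
    intro L N hNge
    have hN1 : 1 ≤ N := le_trans (le_max_left _ _) hNge
    have hNr : (1:ℝ) ≤ (N:ℝ) := by exact_mod_cast hN1
    have hNpos : (0:ℝ) < N := by linarith
    have hHN : H ≤ (N:ℝ) := by
      have h1 : (⌈H⌉₊ : ℝ) ≤ N := by exact_mod_cast le_trans (le_max_right _ _) hNge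
      exact le_trans (Nat.le_ceil H) h1
    have hkey := key L N hN1
    have hlow := hballlow N
    have hcardpos := hballpos N
    rw [hu]
    have hnum_nonneg : (0:ℝ) ≤ (Nat.card ↥(unionGe S.RSet L ∩ ball K N) : ℝ) :=
      Nat.cast_nonneg _
    have hPpos : (0:ℝ) < ((N:ℝ)/A)^n := pow_pos (div_pos hNpos hApos) n
    have h01 : (0:ℝ) ≤ A*((N:ℝ)+1) := mul_nonneg hApos.le (by positivity)
    have h02 : (0:ℝ) ≤ A*((N:ℝ)+H) :=
      mul_nonneg hApos.le (add_nonneg (Nat.cast_nonneg N) (by linarith))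
    have step1 : (Nat.card ↥(unionGe S.RSet L ∩ ball K N) : ℝ) / (Nat.card ↥(ball K N) : ℝ)
        ≤ ((T.card : ℝ) * m * (A*((N:ℝ)+1))^(n-1)
          + (T.card : ℝ) * (A*((N:ℝ)+H))^n * tail L) / ((N:ℝ)/A)^n := by
      refine div_le_div₀ ?_ hkey hPpos hlow
      refine add_nonneg (mul_nonneg (mul_nonneg (Nat.cast_nonneg _) (Nat.cast_nonneg _))
        (pow_nonneg h01 _)) (mul_nonneg (mul_nonneg (Nat.cast_nonneg _)
        (pow_nonneg h02 _)) (htailnn L))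
    refine le_trans step1 ?_
    -- now pure arithmetic
    have hA2 : A*((N:ℝ)+1) ≤ 2*A*(N:ℝ) := by nlinarith
    have hA3 : A*((N:ℝ)+H) ≤ 2*A*(N:ℝ) := by nlinarith
    have hNn : ((N:ℝ)/A)^n = (N:ℝ)^n / A^n := div_pow _ _ _
    have hNpow : (N:ℝ)^n = (N:ℝ)^(n-1) * N := by
      conv_lhs => rw [show n = (n-1)+1 by omega]
      rw [pow_succ]
    have e1 : (T.card : ℝ) * m * (A*((N:ℝ)+1))^(n-1) ≤
        (T.card : ℝ) * m * (2*A*(N:ℝ))^(n-1) := by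
      refine mul_le_mul_of_nonneg_left ?_
        (mul_nonneg (Nat.cast_nonneg _) (Nat.cast_nonneg _))
      exact pow_le_pow_left₀ h01 hA2 _
    have e2 : (T.card : ℝ) * (A*((N:ℝ)+H))^n * tail L ≤
        (T.card : ℝ) * (2*A*(N:ℝ))^n * tail L := by
      refine mul_le_mul_of_nonneg_right
        (mul_le_mul_of_nonneg_left (pow_le_pow_left₀ h02 hA3 _)
          (Nat.cast_nonneg _)) (htailnn L)
    have step2 : ((T.card : ℝ) * m * (A*((N:ℝ)+1))^(n-1)
          + (T.card : ℝ) * (A*((N:ℝ)+H))^n * tail L) / ((N:ℝ)/A)^n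
        ≤ ((T.card : ℝ) * m * (2*A*(N:ℝ))^(n-1)
          + (T.card : ℝ) * (2*A*(N:ℝ))^n * tail L) / ((N:ℝ)/A)^n := by
      refine div_le_div_of_nonneg_right ?_ hPpos.le
      exact add_le_add e1 e2
    refine le_trans step2 (le_of_eq ?_)
    rw [hNn, div_div_eq_mul_div, hK1, hK2]
    rw [mul_pow (2*A) (N:ℝ) n, mul_pow (2*A) (N:ℝ) (n-1), hNpow]
    field_simp
  -- limsup bound
  have hbound : ∀ L, upperDensity (fun N => ball K N) (unionGe S.RSet L) ≤ K2 * tail L := by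
    intro L
    have hr : Tendsto (fun N : ℕ => K1 / (N:ℝ) + K2 * tail L) atTop (𝓝 (0 + K2 * tail L)) := by
      refine Tendsto.add ?_ tendsto_const_nhds
      exact Tendsto.div_atTop tendsto_const_nhds tendsto_natCast_atTop_atTop
    have hle : (fun N => u L N) ≤ᶠ[atTop] (fun N : ℕ => K1 / (N:ℝ) + K2 * tail L) :=
      eventually_atTop.mpr ⟨max 1 ⌈H⌉₊, hq L⟩
    have hcob : IsCoboundedUnder (· ≤ ·) atTop (fun N => u L N) := by
      have hb : IsBoundedUnder (· ≥ ·) atTop (fun N => u L N) :=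
        isBoundedUnder_of ⟨0, fun N => hunn L N⟩
      exact hb.isCoboundedUnder_le
    have hbdd : IsBoundedUnder (· ≤ ·) atTop (fun N : ℕ => K1 / (N:ℝ) + K2 * tail L) :=
      hr.isBoundedUnder_le
    have h1 : limsup (fun N => u L N) atTop ≤
        limsup (fun N : ℕ => K1 / (N:ℝ) + K2 * tail L) atTop :=
      limsup_le_limsup hle hcob hbdd
    rw [hr.limsup_eq, zero_add] at h1
    exact h1
  have hnn : ∀ L, 0 ≤ upperDensity (fun N => ball K N) (unionGe S.RSet L) := by
    intro L
    refine le_limsup_of_frequently_le (Filter.Frequently.of_forall (fun N => hunn L N)) ?_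
    exact isBoundedUnder_of ⟨1, fun N => hub1 L N⟩
  have hK2tail : Tendsto (fun L => K2 * tail L) atTop (𝓝 0) := by
    have h := htail0.const_mul K2
    rw [mul_zero] at h
    exact h
  exact squeeze_zero hnn hbound hK2tail

end ErdosSieve
end
end

section
/- Let R be an Erdős sieve over an étale ℚ-algebra K and (I_N) any Følner sequence in O_K. Then R has strong light tails for (I_N) if and only if for every L ≥ 0 the tail sieve R^L, supported on (𝔟_{L+i})_{i≥1} and defined by R^L_i := R_{L+i}, has weak light tails for (I_N). -/
open Filter Topology MeasureTheory Pointwise symmDiff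

noncomputable section

namespace ErdosSieve

variable {O : Type} [CommRing O]

section Aux
variable {I : ℕ → Set O}

lemma cardI_pos (hI : IsFolner I) (N : ℕ) : 0 < (Nat.card ↥(I N) : ℝ) := by
  haveI := (hI.1 N).to_subtype
  haveI := (hI.2.1 N).to_subtype
  exact_mod_cast Nat.card_pos

lemma ratio_nonneg (A : Set O) (N : ℕ) :
    0 ≤ (Nat.card ↥(A ∩ I N) : ℝ) / (Nat.card ↥(I N) : ℝ) :=
  div_nonneg (Nat.cast_nonneg _) (Nat.cast_nonneg _)

lemma ratio_le_one (hI : IsFolner I) (A : Set O) (N : ℕ) :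
    (Nat.card ↥(A ∩ I N) : ℝ) / (Nat.card ↥(I N) : ℝ) ≤ 1 := by
  rw [div_le_one (cardI_pos hI N)]
  have : Nat.card ↥(A ∩ I N) ≤ Nat.card ↥(I N) := by
    rw [Nat.card_coe_set_eq, Nat.card_coe_set_eq]
    exact Set.ncard_le_ncard Set.inter_subset_right (hI.1 N)
  exact_mod_cast this

lemma ratio_bddAbove (hI : IsFolner I) (A : Set O) :
    IsBoundedUnder (· ≤ ·) atTop
      (fun N => (Nat.card ↥(A ∩ I N) : ℝ) / (Nat.card ↥(I N) : ℝ)) :=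
  isBoundedUnder_of ⟨1, fun N => ratio_le_one hI A N⟩

lemma ratio_cobdd (A : Set O) :
    IsCoboundedUnder (· ≤ ·) atTop
      (fun N => (Nat.card ↥(A ∩ I N) : ℝ) / (Nat.card ↥(I N) : ℝ)) :=
  (isBoundedUnder_of ⟨0, fun N => ratio_nonneg A N⟩ :
    IsBoundedUnder (· ≥ ·) atTop _).isCoboundedUnder_le

lemma upperDensity_nonneg (hI : IsFolner I) (A : Set O) : 0 ≤ upperDensity I A :=
  le_limsup_of_frequently_le (Eventually.frequently (Eventually.of_forall fun N => ratio_nonneg A N))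
    (ratio_bddAbove hI A)

lemma upperDensity_mono (hI : IsFolner I) {A B : Set O} (h : A ⊆ B) :
    upperDensity I A ≤ upperDensity I B := by
  refine limsup_le_limsup (Eventually.of_forall fun N => ?_) (ratio_cobdd A) (ratio_bddAbove hI B)
  refine div_le_div_of_nonneg_right ?_ (cardI_pos hI N).le
  have : (A ∩ I N).ncard ≤ (B ∩ I N).ncard :=
    Set.ncard_le_ncard (Set.inter_subset_inter_left _ h) ((hI.1 N).inter_of_right _)
  rw [Nat.card_coe_set_eq, Nat.card_coe_set_eq]
  exact_mod_cast this

lemma upperDensity_union_le (hI : IsFolner I) (A B : Set O) :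
    upperDensity I (A ∪ B) ≤ upperDensity I A + upperDensity I B := by
  have hpt : ∀ N, (Nat.card ↥((A ∪ B) ∩ I N) : ℝ) / (Nat.card ↥(I N) : ℝ) ≤
      ((fun N => (Nat.card ↥(A ∩ I N) : ℝ) / (Nat.card ↥(I N) : ℝ)) +
       (fun N => (Nat.card ↥(B ∩ I N) : ℝ) / (Nat.card ↥(I N) : ℝ))) N := by
    intro N
    simp only [Pi.add_apply, ← add_div]
    refine div_le_div_of_nonneg_right ?_ (cardI_pos hI N).le
    have : ((A ∪ B) ∩ I N).ncard ≤ (A ∩ I N).ncard + (B ∩ I N).ncard := by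
      rw [Set.union_inter_distrib_right]
      exact Set.ncard_union_le _ _
    rw [Nat.card_coe_set_eq, Nat.card_coe_set_eq, Nat.card_coe_set_eq]
    exact_mod_cast this
  calc upperDensity I (A ∪ B) ≤ limsup _ atTop :=
        limsup_le_limsup (Eventually.of_forall hpt) (ratio_cobdd _)
          (isBoundedUnder_le_add (ratio_bddAbove hI A) (ratio_bddAbove hI B))
    _ ≤ _ := limsup_add_le (isBoundedUnder_of ⟨0, fun N => ratio_nonneg A N⟩)
        (ratio_bddAbove hI A) (ratio_cobdd B) (ratio_bddAbove hI B)

lemma upperDensity_empty : upperDensity I (∅ : Set O) = 0 := by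
  simp [upperDensity, limsup_const]

lemma upperDensity_biUnion_le (hI : IsFolner I) {ι : Type*} (t : Finset ι) (A : ι → Set O) :
    upperDensity I (⋃ c ∈ t, A c) ≤ ∑ c ∈ t, upperDensity I (A c) := by
  classical
  induction t using Finset.induction with
  | empty => simp [upperDensity_empty]
  | insert a s hnot ih =>
    rw [Finset.set_biUnion_insert, Finset.sum_insert hnot]
    exact (upperDensity_union_le hI _ _).trans (by gcongr)

lemma upperDensity_fiber_le (hI : IsFolner I) (b : Ideal O) [Finite (O ⧸ b)] (c : O ⧸ b) :
    upperDensity I ((Ideal.Quotient.mk b) ⁻¹' {c}) ≤ 1 / (Nat.card (O ⧸ b) : ℝ) := by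
  classical
  letI : Fintype (O ⧸ b) := Fintype.ofFinite _
  set q := Ideal.Quotient.mk b with hqdef
  have hq : Function.Surjective q := Ideal.Quotient.mk_surjective
  set rep : O ⧸ b → O := Function.surjInv hq with hrep
  have hrepq : ∀ c', q (rep c') = c' := fun c' => Function.surjInv_eq hq c'
  have hn : 0 < Nat.card (O ⧸ b) := Nat.card_pos
  -- pointwise counting bound via translation
  have key : ∀ (c' : O ⧸ b) (N : ℕ),
      (q ⁻¹' {c} ∩ I N).ncard ≤ (q ⁻¹' {c'} ∩ I N).ncard +
        ((((rep c' - rep c) + ·) '' I N) ∆ (I N)).ncard := by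
    intro c' N
    set d := rep c' - rep c with hd
    have hinj : Function.Injective (fun z : O => z + d) := add_left_injective d
    have hsub : (fun z : O => z + d) '' (q ⁻¹' {c} ∩ I N) ⊆
        (q ⁻¹' {c'} ∩ I N) ∪ (((d + ·) '' I N) ∆ (I N)) := by
      rintro _ ⟨z, ⟨hz1, hz2⟩, rfl⟩
      have hz1' : q z = c := hz1
      have hq1 : q (z + d) = c' := by
        simp [map_add, hz1', hd, map_sub, hrepq]
      by_cases hmem : z + d ∈ I N
      · exact Or.inl ⟨hq1, hmem⟩
      · refine Or.inr ?_
        rw [Set.mem_symmDiff]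
        exact Or.inl ⟨⟨z, hz2, (add_comm d z)⟩, hmem⟩
    have hfin1 : (q ⁻¹' {c'} ∩ I N).Finite := (hI.1 N).inter_of_right _
    have hfin2 : (((d + ·) '' I N) ∆ (I N)).Finite := by
      have : (((d + ·) '' I N) ∆ (I N)) ⊆ ((d + ·) '' I N) ∪ I N := symmDiff_le_sup
      exact (((hI.1 N).image _).union (hI.1 N)).subset this
    calc (q ⁻¹' {c} ∩ I N).ncard
        = ((fun z : O => z + d) '' (q ⁻¹' {c} ∩ I N)).ncard :=
          (Set.ncard_image_of_injective _ hinj).symm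
      _ ≤ ((q ⁻¹' {c'} ∩ I N) ∪ (((d + ·) '' I N) ∆ (I N))).ncard :=
          Set.ncard_le_ncard hsub (hfin1.union hfin2)
      _ ≤ _ := Set.ncard_union_le _ _
  -- fibers partition I N
  have hsum : ∀ N, ∑ c' : O ⧸ b, (q ⁻¹' {c'} ∩ I N).ncard = (I N).ncard := by
    intro N
    set T := (hI.1 N).toFinset with hT
    have h1 : T.card = ∑ c' : O ⧸ b, (T.filter fun z => q z = c').card :=
      Finset.card_eq_sum_card_fiberwise (fun x _ => Finset.mem_univ _)
    have h2 : ∀ c' : O ⧸ b, (q ⁻¹' {c'} ∩ I N) = ↑(T.filter fun z => q z = c') := by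
      intro c'
      ext z
      simp [hT, Set.Finite.mem_toFinset, and_comm]
    have h3 : (I N).ncard = T.card := by
      rw [Set.ncard_eq_toFinset_card _ (hI.1 N)]
    rw [h3, h1]
    exact Finset.sum_congr rfl fun c' _ => by rw [h2 c', Set.ncard_coe_finset]
  -- the real pointwise bound
  have hpt : ∀ N, (Nat.card ↥((q ⁻¹' {c}) ∩ I N) : ℝ) / (Nat.card ↥(I N) : ℝ) ≤
      1 / (Nat.card (O ⧸ b) : ℝ) +
        ∑ c' : O ⧸ b,
          (Nat.card ↥((((rep c' - rep c) + ·) '' I N) ∆ (I N)) : ℝ) / (Nat.card ↥(I N) : ℝ) := by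
    intro N
    set x : ℝ := ((q ⁻¹' {c} ∩ I N).ncard : ℝ) with hx
    set M : ℝ := (Nat.card ↥(I N) : ℝ) with hM
    set E : ℝ := ∑ c' : O ⧸ b,
      ((((((rep c' - rep c) + ·) '' I N) ∆ (I N)).ncard : ℝ)) with hE
    have hM0 : 0 < M := cardI_pos hI N
    have hMn : M = ((I N).ncard : ℝ) := by rw [hM, Nat.card_coe_set_eq]
    have hnR : (0 : ℝ) < (Nat.card (O ⧸ b) : ℝ) := by exact_mod_cast hn
    have hn1 : (1 : ℝ) ≤ (Nat.card (O ⧸ b) : ℝ) := by exact_mod_cast hn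
    have hE0 : 0 ≤ E := Finset.sum_nonneg fun _ _ => Nat.cast_nonneg _
    have hnx : (Nat.card (O ⧸ b) : ℝ) * x ≤ M + E := by
      have := fun c' : O ⧸ b => key c' N
      have hsum' : ∑ c' : O ⧸ b, ((q ⁻¹' {c'} ∩ I N).ncard : ℝ) = ((I N).ncard : ℝ) := by
        exact_mod_cast congrArg (Nat.cast : ℕ → ℝ) (hsum N)
      have : (Nat.card (O ⧸ b) : ℝ) * x =
          ∑ _c' : O ⧸ b, x := by
        rw [Finset.sum_const, Finset.card_univ, nsmul_eq_mul, Nat.card_eq_fintype_card]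
      rw [this, hMn, ← hsum', hE, ← Finset.sum_add_distrib]
      refine Finset.sum_le_sum fun c' _ => ?_
      rw [hx]
      exact_mod_cast key c' N
    have hxM : x / M ≤ 1 / (Nat.card (O ⧸ b) : ℝ) + E / M := by
      have h1 : x ≤ M / (Nat.card (O ⧸ b) : ℝ) + E := by
        have h2 : x ≤ (M + E) / (Nat.card (O ⧸ b) : ℝ) := by
          rw [le_div_iff₀ hnR, mul_comm]
          exact hnx
        have h3 : (M + E) / (Nat.card (O ⧸ b) : ℝ) =
            M / (Nat.card (O ⧸ b) : ℝ) + E / (Nat.card (O ⧸ b) : ℝ) := add_div _ _ _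
        have h4 : E / (Nat.card (O ⧸ b) : ℝ) ≤ E := div_le_self hE0 hn1
        nlinarith
      have h5 : x / M ≤ (M / (Nat.card (O ⧸ b) : ℝ) + E) / M :=
        div_le_div_of_nonneg_right h1 hM0.le
      have h6 : (M / (Nat.card (O ⧸ b) : ℝ) + E) / M =
          1 / (Nat.card (O ⧸ b) : ℝ) + E / M := by
        field_simp
      rw [← h6]; exact h5
    calc (Nat.card ↥((q ⁻¹' {c}) ∩ I N) : ℝ) / (Nat.card ↥(I N) : ℝ)
        = x / M := by rw [hx, hM, Nat.card_coe_set_eq]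
      _ ≤ 1 / (Nat.card (O ⧸ b) : ℝ) + E / M := hxM
      _ = _ := by
          rw [hE, Finset.sum_div]
          congr 1
  -- pass to the limsup
  have hg : Tendsto (fun N => 1 / (Nat.card (O ⧸ b) : ℝ) +
      ∑ c' : O ⧸ b,
        (Nat.card ↥((((rep c' - rep c) + ·) '' I N) ∆ (I N)) : ℝ) / (Nat.card ↥(I N) : ℝ))
      atTop (𝓝 (1 / (Nat.card (O ⧸ b) : ℝ))) := by
    have h0 : Tendsto (fun N => ∑ c' : O ⧸ b,
        (Nat.card ↥((((rep c' - rep c) + ·) '' I N) ∆ (I N)) : ℝ) / (Nat.card ↥(I N) : ℝ))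
        atTop (𝓝 0) := by
      have := tendsto_finset_sum (Finset.univ : Finset (O ⧸ b))
        (fun c' _ => hI.2.2 (rep c' - rep c))
      simpa only [Finset.sum_const, smul_zero] using this
    simpa only [add_zero] using tendsto_const_nhds.add h0
  calc upperDensity I ((Ideal.Quotient.mk b) ⁻¹' {c})
      ≤ limsup (fun N => 1 / (Nat.card (O ⧸ b) : ℝ) +
          ∑ c' : O ⧸ b,
            (Nat.card ↥((((rep c' - rep c) + ·) '' I N) ∆ (I N)) : ℝ) /
              (Nat.card ↥(I N) : ℝ)) atTop :=
        limsup_le_limsup (Eventually.of_forall hpt) (ratio_cobdd _) hg.isBoundedUnder_le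
    _ = _ := hg.limsup_eq


lemma upperDensity_RSet_le (hI : IsFolner I) (S : Sieve O) (i : ℕ) :
    upperDensity I (S.RSet i) ≤ (S.cardR i : ℝ) / (S.normb i : ℝ) := by
  haveI := S.finQuot i
  classical
  set q := Ideal.Quotient.mk (S.b i) with hqdef
  have himg : (q '' S.RSet i).Finite := Set.toFinite _
  set T := himg.toFinset with hT
  have hsubset : S.RSet i ⊆ ⋃ c ∈ T, q ⁻¹' {c} := by
    intro z hz
    exact Set.mem_biUnion (himg.mem_toFinset.2 ⟨z, hz, rfl⟩) rfl
  have hcard : S.cardR i = T.card := by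
    rw [Sieve.cardR, ← hqdef, Nat.card_coe_set_eq, Set.ncard_eq_toFinset_card _ himg]
  calc upperDensity I (S.RSet i) ≤ upperDensity I (⋃ c ∈ T, q ⁻¹' {c}) :=
        upperDensity_mono hI hsubset
    _ ≤ ∑ c ∈ T, upperDensity I (q ⁻¹' {c}) := upperDensity_biUnion_le hI T _
    _ ≤ ∑ _c ∈ T, 1 / (S.normb i : ℝ) :=
        Finset.sum_le_sum fun c _ => upperDensity_fiber_le hI (S.b i) c
    _ = (S.cardR i : ℝ) / (S.normb i : ℝ) := by
        rw [Finset.sum_const, hcard, nsmul_eq_mul]; ring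

lemma unionLt_eq (R : ℕ → Set O) (L : ℕ) : unionLt R L = ⋃ i ∈ Finset.range L, R i := by
  ext x; simp [unionLt, Finset.mem_range]

lemma tailset_subset (R : ℕ → Set O) (L L' : ℕ) :
    unionGe (fun i => R (L + i)) L' \ unionLt (fun i => R (L + i)) L' ⊆ unionGe R (L' + L) := by
  rintro x ⟨hx, -⟩
  simp only [unionGe, Set.mem_iUnion] at hx ⊢
  obtain ⟨i, hi, hxi⟩ := hx
  exact ⟨L + i, by omega, hxi⟩

lemma unionGe_subset_split (R : ℕ → Set O) (L L' : ℕ) :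
    unionGe R L ⊆ unionLt (fun i => R (L + i)) L' ∪
      (unionGe (fun i => R (L + i)) L' \ unionLt (fun i => R (L + i)) L') := by
  intro x hx
  simp only [unionGe, Set.mem_iUnion] at hx
  obtain ⟨j, hj, hxj⟩ := hx
  by_cases hmem : x ∈ unionLt (fun i => R (L + i)) L'
  · exact Or.inl hmem
  · refine Or.inr ⟨?_, hmem⟩
    simp only [unionGe, Set.mem_iUnion]
    refine ⟨j - L, ?_, by rwa [Nat.add_sub_cancel' hj]⟩
    by_contra hlt
    push_neg at hlt
    refine hmem ?_
    simp only [unionLt, Set.mem_iUnion]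
    exact ⟨j - L, hlt, by rwa [Nat.add_sub_cancel' hj]⟩

lemma upperDensity_unionLt_tail_le (hI : IsFolner I) (S : Sieve O) (L L' : ℕ) :
    upperDensity I (unionLt (fun i => S.RSet (L + i)) L') ≤
      ∑ i ∈ Finset.range L', (S.cardR (L + i) : ℝ) / (S.normb (L + i) : ℝ) := by
  rw [unionLt_eq]
  refine (upperDensity_biUnion_le hI (Finset.range L') _).trans ?_
  exact Finset.sum_le_sum fun i _ => upperDensity_RSet_le hI S (L + i)

end Aux

variable {m : ℕ} (K : Fin m → Type) [∀ j, Field (K j)] [∀ j, NumberField (K j)]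

/-- **Strong light tails ⟺ all tail sieves have weak light tails.** An Erdős sieve `R` has
strong light tails for `I` iff for every `L` the tail sieve `R^L_i := R_{L+i}` has weak
light tails for `I`. -/
theorem strong_light_tails_iff_tails_weak
    {m : ℕ} (hm : 0 < m) (K : Fin m → Type) [∀ j, Field (K j)]
    [∀ j, NumberField (K j)]
    (S : Sieve (OK K)) (hE : S.IsErdos) (I : ℕ → Set (OK K)) (hI : IsFolner I) :
    S.HasStrongLightTails I ↔
      ∀ L : ℕ, (Summable fun i => (S.cardR (L + i) : ℝ) / (S.normb (L + i) : ℝ))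
        ∧ WeakLightTailsFam I (fun i => S.RSet (L + i)) := by
  classical
  set f : ℕ → ℝ := fun i => (S.cardR i : ℝ) / (S.normb i : ℝ) with hf
  have hf0 : ∀ i, 0 ≤ f i := fun i => div_nonneg (Nat.cast_nonneg _) (Nat.cast_nonneg _)
  have hEf : Summable f := hE
  have htail : ∀ L : ℕ, Summable fun i => f (L + i) := fun L => by
    simpa [Nat.add_comm] using (summable_nat_add_iff L).2 hEf
  constructor
  · rintro ⟨-, hS⟩ L
    refine ⟨htail L, ?_⟩
    have hcomp : Tendsto (fun L' : ℕ => upperDensity I (unionGe S.RSet (L' + L)))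
        atTop (𝓝 0) := hS.comp (tendsto_add_atTop_nat L)
    refine squeeze_zero (fun L' => upperDensity_nonneg hI _) (fun L' => ?_) hcomp
    exact upperDensity_mono hI (tailset_subset S.RSet L L')
  · intro h
    refine ⟨hE, ?_⟩
    have hdle : ∀ L : ℕ, upperDensity I (unionGe S.RSet L) ≤ ∑' i, f (L + i) := by
      intro L
      have hw := (h L).2
      have hbound : ∀ L' : ℕ, upperDensity I (unionGe S.RSet L) -
          (∑' i, f (L + i)) ≤ upperDensity I
            (unionGe (fun i => S.RSet (L + i)) L' \ unionLt (fun i => S.RSet (L + i)) L') := by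
        intro L'
        have h1 : upperDensity I (unionGe S.RSet L) ≤
            upperDensity I (unionLt (fun i => S.RSet (L + i)) L') +
            upperDensity I
              (unionGe (fun i => S.RSet (L + i)) L' \ unionLt (fun i => S.RSet (L + i)) L') :=
          (upperDensity_mono hI (unionGe_subset_split S.RSet L L')).trans
            (upperDensity_union_le hI _ _)
        have h2 : upperDensity I (unionLt (fun i => S.RSet (L + i)) L') ≤ ∑' i, f (L + i) :=
          (upperDensity_unionLt_tail_le hI S L L').trans
            (Summable.sum_le_tsum (Finset.range L') (fun i _ => hf0 (L + i)) (htail L))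
        linarith
      have hle0 : upperDensity I (unionGe S.RSet L) - (∑' i, f (L + i)) ≤ 0 :=
        ge_of_tendsto hw (Eventually.of_forall hbound)
      linarith
    have hts : Tendsto (fun L : ℕ => ∑' i, f (L + i)) atTop (𝓝 0) := by
      simpa [Nat.add_comm] using tendsto_sum_nat_add f
    exact squeeze_zero (fun L => upperDensity_nonneg hI _) hdle hts


end ErdosSieve
end
end
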